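/- For Algorithm-1 iterates with a saddle point (φ*, q*, μ*) of L, p* = Bφ*, b* = q*, and step size 0 < ρ < (2rs² + s)/(1 + rs)², the real sequence n ↦ ‖pⁿ − p*‖² + ‖bⁿ − b*‖² + ρs‖νⁿ⁻¹ − μ*‖² + ρs‖ηⁿ⁻¹ − μ*‖² is nonincreasing; in particular the sequences (‖pⁿ − p*‖), (‖bⁿ − b*‖), (‖νⁿ − μ*‖), (‖ηⁿ − μ*‖), (‖Bφⁿ − Bφ*‖), (‖qⁿ − q*‖) and (‖μⁿ − μ*‖) are bounded. -/

import Mathlib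

open RealInnerProductSpace Filter Topology

private lemma key_vec {H : Type*} [NormedAddCommGroup H] [InnerProductSpace ℝ H]
    (r s ρ : ℝ) (hs : 0 < s) (hρ : 0 < ρ)
    (hcoef : ρ * (r + 1/s)^2 ≤ 2*r + 1/s)
    (x y P Q m u w : H)
    (hA : ⟪m + (r + 1/s) • P, P + x⟫ ≤ 0)
    (hB : 0 ≤ ⟪m + (r + 1/s) • Q, y - Q⟫)
    (hC : 0 ≤ ⟪m, x - y⟫ + s * ⟪m, u + w⟫) :
    ‖x + (ρ * (r + 1/s)) • P‖^2 + ‖y - (ρ * (r + 1/s)) • Q‖^2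
      + ρ*s*‖m + s⁻¹ • P‖^2 + ρ*s*‖m + s⁻¹ • Q‖^2
    ≤ ‖x‖^2 + ‖y‖^2 + ρ*s*‖u + m‖^2 + ρ*s*‖w + m‖^2 := by
  have hs0 : s ≠ 0 := ne_of_gt hs
  have e1 : ‖x + (ρ * (r + 1/s)) • P‖^2
      = ‖x‖^2 + 2*(ρ*(r+1/s))*⟪x, P⟫ + (ρ*(r+1/s))^2*‖P‖^2 := by
    rw [norm_add_sq_real, real_inner_smul_right, norm_smul]
    simp [mul_pow, sq_abs, Real.norm_eq_abs]; ring
  have e2 : ‖y - (ρ * (r + 1/s)) • Q‖^2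
      = ‖y‖^2 - 2*(ρ*(r+1/s))*⟪y, Q⟫ + (ρ*(r+1/s))^2*‖Q‖^2 := by
    rw [norm_sub_sq_real, real_inner_smul_right, norm_smul]
    simp [mul_pow, sq_abs, Real.norm_eq_abs]; ring
  have e3 : ρ*s*‖m + s⁻¹ • P‖^2
      = ρ*s*‖m‖^2 + 2*ρ*⟪m, P⟫ + (ρ/s)*‖P‖^2 := by
    rw [norm_add_sq_real, real_inner_smul_right, norm_smul]
    simp only [Real.norm_eq_abs, mul_pow, sq_abs, abs_inv]
    field_simp
    rw [sq_abs]
    ring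
  have e4 : ρ*s*‖m + s⁻¹ • Q‖^2
      = ρ*s*‖m‖^2 + 2*ρ*⟪m, Q⟫ + (ρ/s)*‖Q‖^2 := by
    rw [norm_add_sq_real, real_inner_smul_right, norm_smul]
    simp only [Real.norm_eq_abs, mul_pow, sq_abs, abs_inv]
    field_simp
    rw [sq_abs]
    ring
  have e5 : ‖u + m‖^2 = ‖u‖^2 + 2*⟪m, u⟫ + ‖m‖^2 := by
    rw [norm_add_sq_real, real_inner_comm]
  have e6 : ‖w + m‖^2 = ‖w‖^2 + 2*⟪m, w⟫ + ‖m‖^2 := by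
    rw [norm_add_sq_real, real_inner_comm]
  have hA' : ⟪m, P⟫ + ⟪m, x⟫ + (r+1/s)*‖P‖^2 + (r+1/s)*⟪x, P⟫ ≤ 0 := by
    have h := hA
    simp only [inner_add_left, inner_add_right, real_inner_smul_left] at h
    rw [real_inner_self_eq_norm_sq, real_inner_comm x P] at h
    linarith
  have hB' : 0 ≤ ⟪m, y⟫ - ⟪m, Q⟫ + (r+1/s)*⟪y, Q⟫ - (r+1/s)*‖Q‖^2 := by
    have h := hB
    simp only [inner_sub_right, inner_add_left, real_inner_smul_left] at h
    rw [real_inner_self_eq_norm_sq, real_inner_comm y Q] at h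
    linarith
  have hC' : 0 ≤ ⟪m, x⟫ - ⟪m, y⟫ + s*⟪m, u⟫ + s*⟪m, w⟫ := by
    have h := hC
    simp only [inner_sub_right, inner_add_right] at h
    linarith
  rw [e1, e2, e3, e4, e5, e6]
  have h1 := mul_le_mul_of_nonneg_left hA' hρ.le
  have h2 := mul_le_mul_of_nonneg_left hB' hρ.le
  have h3 := mul_le_mul_of_nonneg_left hC' hρ.le
  have h4 : 0 ≤ (ρ * ((2*r+1/s) - ρ*(r+1/s)^2)) * ‖P‖^2 :=
    mul_nonneg (mul_nonneg hρ.le (sub_nonneg.2 hcoef)) (sq_nonneg _)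
  have h5 : 0 ≤ (ρ * ((2*r+1/s) - ρ*(r+1/s)^2)) * ‖Q‖^2 :=
    mul_nonneg (mul_nonneg hρ.le (sub_nonneg.2 hcoef)) (sq_nonneg _)
  have h6 : 0 ≤ ρ*s*‖u‖^2 := mul_nonneg (mul_nonneg hρ.le hs.le) (sq_nonneg _)
  have h7 : 0 ≤ ρ*s*‖w‖^2 := mul_nonneg (mul_nonneg hρ.le hs.le) (sq_nonneg _)
  ring_nf at h1 h2 h3 h4 h5 h6 h7 ⊢
  linarith

private lemma norm_le_sqrt' {H : Type*} [NormedAddCommGroup H] (v : H) (c : ℝ)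
    (h : ‖v‖^2 ≤ c) : ‖v‖ ≤ Real.sqrt c := by
  have h2 := Real.sqrt_le_sqrt h
  rwa [Real.sqrt_sq (norm_nonneg v)] at h2

set_option maxHeartbeats 2000000 in
theorem algorithm1_monotone_and_bounded
    {V H : Type*} [NormedAddCommGroup V] [InnerProductSpace ℝ V] [CompleteSpace V]
    [NormedAddCommGroup H] [InnerProductSpace ℝ H] [CompleteSpace H]
    (B : V →L[ℝ] H) (F : H → ℝ) (G : V → ℝ) (I : H → ℝ)
    (hFconv : ConvexOn ℝ Set.univ F) (hFlsc : LowerSemicontinuous F)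
    (hGconv : ConvexOn ℝ Set.univ G) (hGlsc : LowerSemicontinuous G)
    (hIconv : ConvexOn ℝ Set.univ I) (hIlsc : LowerSemicontinuous I)
    (L : V → H → H → ℝ)
    (hL : ∀ (φ' : V) (q' μ' : H), L φ' q' μ' = F q' + G φ' - I μ' + ⟪μ', B φ' - q'⟫)
    (r s ρ : ℝ) (hr : 0 < r) (hs : 0 < s)
    (hρ1 : 0 < ρ) (hρ2 : ρ < (2*r*s^2 + s) / (1 + r*s)^2)
    (φs : V) (qs μs : H) (ps bs : H) (hps : ps = B φs) (hbs : bs = qs)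
    (hsaddle : ∀ (φ' : V) (q' μ' : H), L φs qs μ' ≤ L φs qs μs ∧ L φs qs μs ≤ L φ' q' μs)
    (φ : ℕ → V) (q μ p b ν η : ℕ → H)
    (hi : ∀ n, 1 ≤ n → ∀ μ' : H,
      I μ' - I (μ n) + ⟪μ n - μ', p n - b n⟫ - s * ⟪μ n - μ', μ n - ν (n-1)⟫
        - s * ⟪μ n - μ', μ n - η (n-1)⟫ ≥ 0)
    (hii : ∀ n, 1 ≤ n →
      ν n = s⁻¹ • (B (φ n) - p n) + μ n ∧ η n = s⁻¹ • (b n - q n) + μ n)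
    (hiii : ∀ n, 1 ≤ n → ∀ φ' : V,
      G φ' - G (φ n) + ⟪ν n + r • (B (φ n) - p n), B φ' - B (φ n)⟫ ≥ 0)
    (hiv : ∀ n, 1 ≤ n → ∀ q' : H,
      F q' - F (q n) + ⟪η n + r • (b n - q n), q n - q'⟫ ≥ 0)
    (hv : ∀ n, 1 ≤ n →
      p (n+1) = p n + (ρ * (r + 1/s)) • (B (φ n) - p n) ∧
      b (n+1) = b n - (ρ * (r + 1/s)) • (b n - q n))
    :
    (∀ n, 1 ≤ n →
      ‖p (n+1) - ps‖^2 + ‖b (n+1) - bs‖^2 + ρ*s*‖ν n - μs‖^2 + ρ*s*‖η n - μs‖^2 ≤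
      ‖p n - ps‖^2 + ‖b n - bs‖^2 + ρ*s*‖ν (n-1) - μs‖^2 + ρ*s*‖η (n-1) - μs‖^2) ∧
    (∃ C : ℝ, ∀ n, 1 ≤ n →
      ‖p n - ps‖ ≤ C ∧ ‖b n - bs‖ ≤ C ∧ ‖ν n - μs‖ ≤ C ∧ ‖η n - μs‖ ≤ C ∧
      ‖B (φ n) - B φs‖ ≤ C ∧ ‖q n - qs‖ ≤ C ∧ ‖μ n - μs‖ ≤ C) := by
  have hs0 : s ≠ 0 := ne_of_gt hs
  have hα : 0 < ρ * (r + 1/s) := by positivity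
  have hρs : 0 < ρ * s := mul_pos hρ1 hs
  have hcoef : ρ * (r + 1/s)^2 ≤ 2*r + 1/s := by
    have h1 : (0:ℝ) < (1 + r*s)^2 := by positivity
    have h2 : ρ * (1 + r*s)^2 < 2*r*s^2 + s := (lt_div_iff₀ h1).mp hρ2
    have hs2 : (0:ℝ) < s^2 := by positivity
    have hh : (r + 1/s) * s = 1 + r*s := by field_simp; ring
    have hh2 : (1/s) * s = 1 := by field_simp
    have e1 : ρ * (r + 1/s)^2 * s^2 = ρ * (1 + r*s)^2 := by
      calc ρ * (r + 1/s)^2 * s^2 = ρ * ((r + 1/s) * s)^2 := by ring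
        _ = ρ * (1 + r*s)^2 := by rw [hh]
    have e2 : (2*r + 1/s) * s^2 = 2*r*s^2 + s := by
      calc (2*r + 1/s) * s^2 = 2*r*s^2 + ((1/s) * s) * s := by ring
        _ = 2*r*s^2 + s := by rw [hh2]; ring
    exact le_of_mul_le_mul_right (by rw [e1, e2]; exact h2.le) hs2
  have mono : ∀ n, 1 ≤ n →
      ‖p (n+1) - ps‖^2 + ‖b (n+1) - bs‖^2 + ρ*s*‖ν n - μs‖^2 + ρ*s*‖η n - μs‖^2 ≤
      ‖p n - ps‖^2 + ‖b n - bs‖^2 + ρ*s*‖ν (n-1) - μs‖^2 + ρ*s*‖η (n-1) - μs‖^2 := by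
    intro n hn
    obtain ⟨hν, hη⟩ := hii n hn
    obtain ⟨hp1, hb1⟩ := hv n hn
    have sadG : G φs - G (φ n) ≤ ⟪μs, B (φ n) - B φs⟫ := by
      have h := (hsaddle (φ n) qs μs).2
      rw [hL, hL] at h
      have e : ⟪μs, B (φ n) - qs⟫ - ⟪μs, B φs - qs⟫ = ⟪μs, B (φ n) - B φs⟫ := by
        rw [← inner_sub_right]; congr 1; abel
      linarith
    have hA : ⟪(μ n - μs) + (r + 1/s) • (B (φ n) - p n),
        (B (φ n) - p n) + (p n - ps)⟫ ≤ 0 := by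
      have hAraw := hiii n hn φs
      have e1 : (μ n - μs) + (r + 1/s) • (B (φ n) - p n)
          = (ν n + r • (B (φ n) - p n)) - μs := by rw [hν]; module
      have e2 : (B (φ n) - p n) + (p n - ps) = B (φ n) - B φs := by rw [hps]; abel
      have e3 : ⟪ν n + r • (B (φ n) - p n), B φs - B (φ n)⟫
          = - ⟪ν n + r • (B (φ n) - p n), B (φ n) - B φs⟫ := by
        rw [← inner_neg_right]; congr 1; abel
      rw [e3] at hAraw
      rw [e1, e2, inner_sub_left]
      linarith
    have sadF : ⟪μs, q n - qs⟫ ≤ F (q n) - F qs := by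
      have h := (hsaddle φs (q n) μs).2
      rw [hL, hL] at h
      have e : ⟪μs, B φs - qs⟫ - ⟪μs, B φs - q n⟫ = ⟪μs, q n - qs⟫ := by
        rw [← inner_sub_right]; congr 1; abel
      linarith
    have hB : 0 ≤ ⟪(μ n - μs) + (r + 1/s) • (b n - q n),
        (b n - bs) - (b n - q n)⟫ := by
      have hBraw := hiv n hn qs
      have e1 : (μ n - μs) + (r + 1/s) • (b n - q n)
          = (η n + r • (b n - q n)) - μs := by rw [hη]; module
      have e2 : (b n - bs) - (b n - q n) = q n - qs := by rw [hbs]; abel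
      rw [e1, e2, inner_sub_left]
      linarith
    have sadI : I μs - I (μ n) ≤ ⟪μs - μ n, B φs - qs⟫ := by
      have h := (hsaddle φs qs (μ n)).1
      rw [hL, hL] at h
      have e : ⟪μs, B φs - qs⟫ - ⟪μ n, B φs - qs⟫ = ⟪μs - μ n, B φs - qs⟫ :=
        (inner_sub_left _ _ _).symm
      linarith
    have hC : 0 ≤ ⟪μ n - μs, (p n - ps) - (b n - bs)⟫
        + s * ⟪μ n - μs, (ν (n-1) - μ n) + (η (n-1) - μ n)⟫ := by
      have hCraw := hi n hn μs
      have e1 : ⟪μ n - μs, (p n - ps) - (b n - bs)⟫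
          = ⟪μ n - μs, p n - b n⟫ - ⟪μ n - μs, B φs - qs⟫ := by
        rw [← inner_sub_right]; congr 1; rw [hps, hbs]; abel
      have e2 : ⟪μ n - μs, (ν (n-1) - μ n) + (η (n-1) - μ n)⟫
          = - ⟪μ n - μs, μ n - ν (n-1)⟫ - ⟪μ n - μs, μ n - η (n-1)⟫ := by
        rw [inner_add_right,
          show (ν (n-1) - μ n) = -(μ n - ν (n-1)) by abel,
          show (η (n-1) - μ n) = -(μ n - η (n-1)) by abel,
          inner_neg_right, inner_neg_right]
        ring
      have e3 : ⟪μs - μ n, B φs - qs⟫ = - ⟪μ n - μs, B φs - qs⟫ := by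
        rw [← inner_neg_left]; congr 1; abel
      rw [e3] at sadI
      rw [e1, e2]
      nlinarith [hCraw, sadI]
    have key := key_vec r s ρ hs hρ1 hcoef (p n - ps) (b n - bs)
      (B (φ n) - p n) (b n - q n) (μ n - μs) (ν (n-1) - μ n) (η (n-1) - μ n) hA hB hC
    have g1 : p (n+1) - ps = (p n - ps) + (ρ * (r + 1/s)) • (B (φ n) - p n) := by
      rw [hp1]; abel
    have g2 : b (n+1) - bs = (b n - bs) - (ρ * (r + 1/s)) • (b n - q n) := by
      rw [hb1]; abel
    have g3 : ν n - μs = (μ n - μs) + s⁻¹ • (B (φ n) - p n) := by rw [hν]; abel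
    have g4 : η n - μs = (μ n - μs) + s⁻¹ • (b n - q n) := by rw [hη]; abel
    have g5 : ν (n-1) - μs = (ν (n-1) - μ n) + (μ n - μs) := by abel
    have g6 : η (n-1) - μs = (η (n-1) - μ n) + (μ n - μs) := by abel
    rw [g1, g2, g3, g4, g5, g6]
    exact key
  refine ⟨mono, ?_⟩
  set Sf : ℕ → ℝ := fun n => ‖p n - ps‖^2 + ‖b n - bs‖^2
    + ρ*s*‖ν (n-1) - μs‖^2 + ρ*s*‖η (n-1) - μs‖^2 with hSf
  have hSmono : ∀ n, 1 ≤ n → Sf (n+1) ≤ Sf n := by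
    intro n hn
    have h := mono n hn
    simpa [hSf, Nat.add_sub_cancel] using h
  have hS1 : ∀ n, 1 ≤ n → Sf n ≤ Sf 1 := by
    intro n hn
    induction n, hn using Nat.le_induction with
    | base => exact le_refl _
    | succ n hn ih => exact (hSmono n hn).trans ih
  set a := Real.sqrt (Sf 1) with ha
  set c := Real.sqrt (Sf 1 / (ρ * s)) with hc
  have hterm : ∀ k, 0 ≤ ρ*s*‖ν (k-1) - μs‖^2 ∧ 0 ≤ ρ*s*‖η (k-1) - μs‖^2 := by
    intro k; constructor <;> positivity
  have hpb : ∀ n, 1 ≤ n → ‖p n - ps‖ ≤ a := by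
    intro n hn
    apply norm_le_sqrt'
    have h := hS1 n hn
    have h1 := (hterm n).1; have h2 := (hterm n).2
    have h3 : (0:ℝ) ≤ ‖b n - bs‖^2 := sq_nonneg _
    simp only [hSf] at h ⊢
    linarith
  have hbb : ∀ n, 1 ≤ n → ‖b n - bs‖ ≤ a := by
    intro n hn
    apply norm_le_sqrt'
    have h := hS1 n hn
    have h1 := (hterm n).1; have h2 := (hterm n).2
    have h3 : (0:ℝ) ≤ ‖p n - ps‖^2 := sq_nonneg _
    simp only [hSf] at h ⊢
    linarith
  have hνb : ∀ n, 1 ≤ n → ‖ν n - μs‖ ≤ c := by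
    intro n hn
    apply norm_le_sqrt'
    have h := hS1 (n+1) (by omega)
    simp only [hSf, Nat.add_sub_cancel] at h
    have h2 : (0:ℝ) ≤ ρ*s*‖η n - μs‖^2 := by positivity
    have h3 : (0:ℝ) ≤ ‖p (n+1) - ps‖^2 := sq_nonneg _
    have h4 : (0:ℝ) ≤ ‖b (n+1) - bs‖^2 := sq_nonneg _
    rw [le_div_iff₀ hρs]
    simp only [hSf]
    nlinarith
  have hηb : ∀ n, 1 ≤ n → ‖η n - μs‖ ≤ c := by
    intro n hn
    apply norm_le_sqrt'
    have h := hS1 (n+1) (by omega)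
    simp only [hSf, Nat.add_sub_cancel] at h
    have h2 : (0:ℝ) ≤ ρ*s*‖ν n - μs‖^2 := by positivity
    have h3 : (0:ℝ) ≤ ‖p (n+1) - ps‖^2 := sq_nonneg _
    have h4 : (0:ℝ) ≤ ‖b (n+1) - bs‖^2 := sq_nonneg _
    rw [le_div_iff₀ hρs]
    simp only [hSf]
    nlinarith
  have hPb : ∀ n, 1 ≤ n → ‖B (φ n) - p n‖ ≤ 2*a / (ρ * (r + 1/s)) := by
    intro n hn
    have hp1 := (hv n hn).1
    have e : (ρ * (r + 1/s)) • (B (φ n) - p n) = (p (n+1) - ps) - (p n - ps) := by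
      rw [hp1]; abel
    have h2 : (ρ * (r + 1/s)) * ‖B (φ n) - p n‖ ≤ 2*a := by
      calc (ρ * (r + 1/s)) * ‖B (φ n) - p n‖
          = ‖(ρ * (r + 1/s)) • (B (φ n) - p n)‖ := by
            rw [norm_smul, Real.norm_eq_abs, abs_of_pos hα]
        _ = ‖(p (n+1) - ps) - (p n - ps)‖ := by rw [e]
        _ ≤ ‖p (n+1) - ps‖ + ‖p n - ps‖ := norm_sub_le _ _
        _ ≤ a + a := add_le_add (hpb (n+1) (by omega)) (hpb n hn)
        _ = 2*a := by ring
    rw [le_div_iff₀ hα]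
    linarith
  have hQb : ∀ n, 1 ≤ n → ‖b n - q n‖ ≤ 2*a / (ρ * (r + 1/s)) := by
    intro n hn
    have hb1 := (hv n hn).2
    have e : (ρ * (r + 1/s)) • (b n - q n) = (b n - bs) - (b (n+1) - bs) := by
      rw [hb1]; abel
    have h2 : (ρ * (r + 1/s)) * ‖b n - q n‖ ≤ 2*a := by
      calc (ρ * (r + 1/s)) * ‖b n - q n‖
          = ‖(ρ * (r + 1/s)) • (b n - q n)‖ := by
            rw [norm_smul, Real.norm_eq_abs, abs_of_pos hα]
        _ = ‖(b n - bs) - (b (n+1) - bs)‖ := by rw [e]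
        _ ≤ ‖b n - bs‖ + ‖b (n+1) - bs‖ := norm_sub_le _ _
        _ ≤ a + a := add_le_add (hbb n hn) (hbb (n+1) (by omega))
        _ = 2*a := by ring
    rw [le_div_iff₀ hα]
    linarith
  have ha0 : 0 ≤ a := Real.sqrt_nonneg _
  have hc0 : 0 ≤ c := Real.sqrt_nonneg _
  have hd0 : 0 ≤ 2*a / (ρ * (r + 1/s)) := by positivity
  have he0 : 0 ≤ (2*a / (ρ * (r + 1/s))) / s := by positivity
  refine ⟨a + c + 2*a / (ρ * (r + 1/s)) + (2*a / (ρ * (r + 1/s))) / s, fun n hn => ?_⟩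
  refine ⟨by linarith [hpb n hn], by linarith [hbb n hn], by linarith [hνb n hn],
    by linarith [hηb n hn], ?_, ?_, ?_⟩
  · have e : B (φ n) - B φs = (B (φ n) - p n) + (p n - ps) := by rw [hps]; abel
    rw [e]
    have := norm_add_le (B (φ n) - p n) (p n - ps)
    linarith [hPb n hn, hpb n hn]
  · have e : q n - qs = (b n - bs) - (b n - q n) := by rw [hbs]; abel
    rw [e]
    have := norm_sub_le (b n - bs) (b n - q n)
    linarith [hbb n hn, hQb n hn]
  · have hν := (hii n hn).1
    have e : μ n - μs = (ν n - μs) - s⁻¹ • (B (φ n) - p n) := by rw [hν]; abel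
    rw [e]
    have h1 := norm_sub_le (ν n - μs) (s⁻¹ • (B (φ n) - p n))
    have h2 : ‖s⁻¹ • (B (φ n) - p n)‖ ≤ (2*a / (ρ * (r + 1/s))) / s := by
      rw [norm_smul, Real.norm_eq_abs, abs_of_pos (inv_pos.mpr hs)]
      rw [div_eq_mul_inv (2*a / (ρ * (r + 1/s))) s, mul_comm _ s⁻¹]
      exact mul_le_mul_of_nonneg_left (hPb n hn) (inv_pos.mpr hs).le
    linarith [hνb n hn]
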